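/- Let Y be a 2n×2n real symmetric matrix and Σ a 2n×2n real skew-symmetric matrix with Y - iΣ positive semidefinite. Then ker Y = ker Σ ∩ ker(Y - iΣ), where all kernels are over ℂ^{2n}. -/

import Mathlib

open Matrix Complex ComplexOrder

/-- If `Y` is real symmetric, `Sg` real skew-symmetric, and `Y - i·Sg`
is positive semidefinite, then `ker Y = ker Sg ∩ ker (Y - i·Sg)` over `ℂ^{2n}`. -/
theorem kernel_Y_eq_inter (n : ℕ)
    (Y Sg : Matrix (Fin (2 * n)) (Fin (2 * n)) ℝ)
    (hY : Y.IsSymm)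
    (hSg : Sgᵀ = -Sg)
    (h : ((Y.map Complex.ofReal) - Complex.I • (Sg.map Complex.ofReal)).PosSemidef) :
    ∀ w : Fin (2 * n) → ℂ,
      (Y.map Complex.ofReal).mulVec w = 0 ↔
        ((Sg.map Complex.ofReal).mulVec w = 0 ∧
         ((Y.map Complex.ofReal) - Complex.I • (Sg.map Complex.ofReal)).mulVec w = 0) := by
  intro w
  set Yc := Y.map Complex.ofReal with hYc
  set Sc := Sg.map Complex.ofReal with hSc
  set M := Yc - Complex.I • Sc with hM
  have hYct : Ycᵀ = Yc := by
    rw [hYc, ← Matrix.transpose_map, hY.eq]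
  have hSct : Scᵀ = -Sc := by
    rw [hSc, ← Matrix.transpose_map, hSg]
    ext i j
    simp
  have hMt : Mᵀ = Yc + Complex.I • Sc := by
    rw [hM, Matrix.transpose_sub, Matrix.transpose_smul, hYct, hSct]
    simp [sub_neg_eq_add]
  have hsum : M + Mᵀ = (2 : ℂ) • Yc := by
    rw [hMt, hM]; module
  constructor
  · intro hw
    have ht : Mᵀ.PosSemidef := h.transpose
    have ha : 0 ≤ star w ⬝ᵥ M *ᵥ w := h.dotProduct_mulVec_nonneg w
    have hb : 0 ≤ star w ⬝ᵥ Mᵀ *ᵥ w := ht.dotProduct_mulVec_nonneg w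
    have habsum : star w ⬝ᵥ M *ᵥ w + star w ⬝ᵥ Mᵀ *ᵥ w = 0 := by
      rw [← dotProduct_add, ← add_mulVec, hsum, smul_mulVec, hw, smul_zero,
        dotProduct_zero]
    have ha0 : star w ⬝ᵥ M *ᵥ w = 0 := by
      have hne := neg_eq_of_add_eq_zero_left habsum
      have hle : star w ⬝ᵥ M *ᵥ w ≤ 0 := by
        rw [← hne]; exact neg_nonpos.mpr hb
      exact le_antisymm hle ha
    have hMw : M *ᵥ w = 0 := (h.dotProduct_mulVec_zero_iff w).mp ha0
    have hScw : Sc *ᵥ w = 0 := by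
      have : Complex.I • (Sc *ᵥ w) = 0 := by
        have := sub_mulVec Yc (Complex.I • Sc) w
        rw [← hM, hMw, hw, smul_mulVec] at this
        simpa using this.symm
      simpa [smul_eq_zero, Complex.I_ne_zero] using this
    exact ⟨hScw, hMw⟩
  · rintro ⟨h1, h2⟩
    have := sub_mulVec Yc (Complex.I • Sc) w
    rw [← hM, h2, smul_mulVec, h1, smul_zero, sub_zero] at this
    exact this.symm
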